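/- Let V be the n×N event matrix and V̄ the (n+1)×N matrix obtained by appending a row of all ones; let q̄ ∈ ℝ^{n+1} extend q by the entry 1. Then the credence base (V, q) is coherent if and only if for every a ∈ ℝ^{n+1} with V̄^T a ≥ 0 (entrywise), one has a · q̄ ≥ 0. -/

import Mathlib

open scoped BigOperators

def Coherent {n N : ℕ} (V : Fin n → Fin N → ℝ) (q : Fin n → ℝ) : Prop :=
  ∃ π : Fin N → ℝ, (∀ j, 0 ≤ π j) ∧ (∑ j, π j) = 1 ∧ ∀ i, (∑ j, V i j * π j) = q i

lemma dot_repr {m : ℕ} (f : (Fin m → ℝ) →L[ℝ] ℝ) (x : Fin m → ℝ) :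
    f x = ∑ k, x k * f (Pi.single k 1) := by
  have hx : x = ∑ k, x k • (Pi.single k 1 : Fin m → ℝ) := by
    funext j
    simp [Pi.single_apply, Finset.sum_ite_eq']
  conv_lhs => rw [hx]
  rw [map_sum]
  simp [smul_eq_mul]

/-- Dutch Book theorem: `(V, q)` is coherent iff every vector
`(a, a₀) ∈ ℝ^{n+1}` with `V̄ᵀ (a, a₀) ≥ 0` entrywise satisfies `(a, a₀) · (q, 1) ≥ 0`,
where `V̄` is `V` with a row of ones appended and `q̄` is `q` with the entry `1` appended. -/
theorem coherent_iff_no_dutch_book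
    {n N : ℕ} (V : Fin n → Fin N → ℝ)
    (hV : ∀ i j, V i j = 0 ∨ V i j = 1)
    (q : Fin n → ℝ) (hq : ∀ i, q i ∈ Set.Icc (0:ℝ) 1) :
    Coherent V q ↔
      ∀ (a : Fin n → ℝ) (a₀ : ℝ),
        (∀ j, 0 ≤ (∑ i, a i * V i j) + a₀) → 0 ≤ (∑ i, a i * q i) + a₀ := by
  constructor
  · rintro ⟨π, hπ0, hπ1, hπV⟩ a a₀ ha
    have step : (∑ i, a i * q i) = ∑ j, π j * ∑ i, a i * V i j := by
      calc ∑ i, a i * q i = ∑ i, ∑ j, a i * (V i j * π j) := by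
            refine Finset.sum_congr rfl fun i _ => ?_
            rw [← hπV i, Finset.mul_sum]
        _ = ∑ j, ∑ i, a i * (V i j * π j) := Finset.sum_comm
        _ = ∑ j, π j * ∑ i, a i * V i j := by
            refine Finset.sum_congr rfl fun j _ => ?_
            rw [Finset.mul_sum]
            exact Finset.sum_congr rfl fun i _ => by ring
    have key : (∑ i, a i * q i) + a₀ = ∑ j, π j * ((∑ i, a i * V i j) + a₀) := by
      have expand : ∑ j, π j * ((∑ i, a i * V i j) + a₀)
          = (∑ j, π j * ∑ i, a i * V i j) + (∑ j, π j) * a₀ := by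
        rw [Finset.sum_mul, ← Finset.sum_add_distrib]
        exact Finset.sum_congr rfl fun j _ => by ring
      rw [expand, hπ1, one_mul, step]
    rw [key]
    exact Finset.sum_nonneg fun j _ => mul_nonneg (hπ0 j) (ha j)
  · intro h
    by_contra hnc
    set Vb : Fin (n+1) → Fin N → ℝ := Fin.snoc V (fun _ => 1) with hVb
    set qb : Fin (n+1) → ℝ := Fin.snoc q 1 with hqb
    let T : (Fin N → ℝ) →ₗ[ℝ] (Fin (n+1) → ℝ) :=
      { toFun := fun π k => ∑ j, Vb k j * π j
        map_add' := by
          intro x y; funext k; simp [mul_add, Finset.sum_add_distrib]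
        map_smul' := by
          intro c x; funext k
          simp only [Finset.mul_sum, smul_eq_mul, RingHom.id_apply, Pi.smul_apply]
          exact Finset.sum_congr rfl fun j _ => by ring }
    have hTc : Continuous T := T.continuous_of_finiteDimensional
    set S : Set (Fin (n+1) → ℝ) := T '' stdSimplex ℝ (Fin N) with hS
    have hconv : Convex ℝ S := (convex_stdSimplex ℝ (Fin N)).linear_image T
    have hcl : IsClosed S :=
      ((isCompact_stdSimplex ℝ (Fin N)).image hTc).isClosed
    have hqnotin : qb ∉ S := by
      rintro ⟨π, ⟨hπ0, hπ1⟩, hπq⟩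
      apply hnc
      refine ⟨π, hπ0, hπ1, fun i => ?_⟩
      have := congrFun hπq (Fin.castSucc i)
      simpa [T, hVb, hqb, Fin.snoc_castSucc] using this
    obtain ⟨f, u, hfq, hfS⟩ := geometric_hahn_banach_point_closed hconv hcl hqnotin
    set av : Fin (n+1) → ℝ := fun k => f (Pi.single k 1) with hav
    set a : Fin n → ℝ := fun i => av (Fin.castSucc i) with ha
    set a₀ : ℝ := av (Fin.last n) - u with ha₀
    have key : ∀ x : Fin (n+1) → ℝ,
        f x - u = (∑ i, x (Fin.castSucc i) * a i) + (x (Fin.last n) * av (Fin.last n) - u) := by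
      intro x
      rw [dot_repr f x, Fin.sum_univ_castSucc]
      simp only [ha, hav]
      ring
    have hcol : ∀ j, 0 ≤ (∑ i, a i * V i j) + a₀ := by
      intro j
      have hmem : (fun k => Vb k j) ∈ S := by
        refine ⟨Pi.single j 1, ⟨?_, ?_⟩, ?_⟩
        · intro k; by_cases hk : k = j <;> simp [Pi.single_apply, hk]
        · simp [Pi.single_apply, Finset.sum_ite_eq']
        · funext k
          simp [T, Pi.single_apply, Finset.sum_ite_eq', mul_ite]
      have h1 : u < f (fun k => Vb k j) := hfS _ hmem
      have h5 : (∑ i, a i * V i j) + a₀ = f (fun k => Vb k j) - u := by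
        rw [key]
        simp only [hVb, Fin.snoc_castSucc, Fin.snoc_last]
        have hc : ∑ i, V i j * a i = ∑ i, a i * V i j :=
          Finset.sum_congr rfl fun i _ => mul_comm _ _
        rw [hc, ha₀]
        ring
      rw [h5]; linarith
    have hfin := h a a₀ hcol
    have h5 : (∑ i, a i * q i) + a₀ = f qb - u := by
      rw [key]
      simp only [hqb, Fin.snoc_castSucc, Fin.snoc_last]
      have hc : ∑ i, q i * a i = ∑ i, a i * q i :=
        Finset.sum_congr rfl fun i _ => mul_comm _ _
      rw [hc, ha₀]
      ring
    rw [h5] at hfin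
    linarith
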